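/- Let σ ⊆ N_ℝ ≅ ℝ² be a full-dimensional strongly convex rational polyhedral cone and v ∈ int(σ) ∩ N a lattice point. Then v is strongly decomposable in σ (i.e., v = v' + v'' with v', v'' ∈ int(σ) ∩ N) if and only if 1 is not a value of ⟨·, v⟩ on the Hilbert basis of the dual cone σ^∨ ⊆ M. -/

import Mathlib

noncomputable section

/-- Embedding of the lattice `ℤ²` into `ℝ²`. -/
def toR (p : ℤ × ℤ) : ℝ × ℝ := ((p.1 : ℝ), (p.2 : ℝ))

/-- Real pairing of a real point with a lattice functional. -/
def pairR (x : ℝ × ℝ) (u : ℤ × ℤ) : ℝ := x.1 * u.1 + x.2 * u.2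

/-- Integral pairing `⟨m, v⟩`. -/
def pairZ (m v : ℤ × ℤ) : ℤ := m.1 * v.1 + m.2 * v.2

/-- The rational polyhedral cone in `ℝ²` generated by two lattice vectors. -/
def cone2 (a b : ℤ × ℤ) : Set (ℝ × ℝ) :=
  {x | ∃ c d : ℝ, 0 ≤ c ∧ 0 ≤ d ∧ x = c • toR a + d • toR b}

/-- The lattice points of the dual cone `σ^∨ ∩ M`. -/
def dualLat (σ : Set (ℝ × ℝ)) : Set (ℤ × ℤ) := {m | ∀ x ∈ σ, 0 ≤ pairR x m}

/-- The Hilbert basis of `σ^∨`: the indecomposable nonzero elements of the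
semigroup `σ^∨ ∩ M`. -/
def hilb (σ : Set (ℝ × ℝ)) : Set (ℤ × ℤ) :=
  {m ∈ dualLat σ | m ≠ 0 ∧
    ¬ ∃ m' ∈ dualLat σ, ∃ m'' ∈ dualLat σ, m' ≠ 0 ∧ m'' ≠ 0 ∧ m = m' + m''}

/-- `v` is strongly decomposable in `σ` if it is the sum of two interior lattice
points of `σ`. -/
def StronglyDecomposable (σ : Set (ℝ × ℝ)) (v : ℤ × ℤ) : Prop :=
  ∃ v' v'' : ℤ × ℤ, toR v' ∈ interior σ ∧ toR v'' ∈ interior σ ∧ v = v' + v''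

lemma pairR_toR (m w : ℤ × ℤ) : pairR (toR w) m = (pairZ m w : ℝ) := by
  simp only [pairR, toR, pairZ]
  push_cast
  ring

lemma toR_ne_zero {m : ℤ × ℤ} (h : m ≠ 0) : toR m ≠ 0 := by
  intro h0
  apply h
  have h1 : (m.1 : ℝ) = 0 ∧ (m.2 : ℝ) = 0 := by
    simpa [toR, Prod.ext_iff] using h0
  have : m.1 = 0 ∧ m.2 = 0 := by exact_mod_cast h1
  exact Prod.ext this.1 this.2

lemma pairR_pos_of_interior {s : Set (ℝ × ℝ)} {m : ℤ × ℤ}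
    (hm : ∀ x ∈ s, 0 ≤ pairR x m) (hm0 : m ≠ 0) {x : ℝ × ℝ}
    (hx : x ∈ interior s) : 0 < pairR x m := by
  rcases (hm x (interior_subset hx)).lt_or_eq with h | h
  · exact h
  exfalso
  rw [mem_interior_iff_mem_nhds, Metric.mem_nhds_iff] at hx
  obtain ⟨ε, hε, hball⟩ := hx
  have hn0 : toR m ≠ 0 := toR_ne_zero hm0
  have hn : 0 < ‖toR m‖ := norm_pos_iff.mpr hn0
  set δ : ℝ := ε / (2 * ‖toR m‖) with hδ
  have hδpos : 0 < δ := by positivity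
  have hy : x - δ • toR m ∈ Metric.ball x ε := by
    rw [Metric.mem_ball, dist_eq_norm]
    have h2 : x - δ • toR m - x = -(δ • toR m) := by abel
    rw [h2, norm_neg, norm_smul, Real.norm_eq_abs, abs_of_pos hδpos, hδ]
    rw [div_mul_eq_mul_div, mul_comm]
    rw [div_lt_iff₀ (by positivity)]
    nlinarith
  have h0 := hm _ (hball hy)
  have hm2 : 0 < (m.1:ℝ)^2 + (m.2:ℝ)^2 := by
    have : (m.1:ℝ) ≠ 0 ∨ (m.2:ℝ) ≠ 0 := by
      by_contra hc
      push_neg at hc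
      exact hm0 (Prod.ext (by exact_mod_cast hc.1) (by exact_mod_cast hc.2))
    rcases this with h1 | h1
    · nlinarith [sq_nonneg (m.2:ℝ), sq_pos_of_ne_zero h1]
    · nlinarith [sq_nonneg (m.1:ℝ), sq_pos_of_ne_zero h1]
  have hcomp : pairR (x - δ • toR m) m
      = pairR x m - δ * ((m.1:ℝ)^2 + (m.2:ℝ)^2) := by
    simp only [pairR, toR, Prod.fst_sub, Prod.snd_sub, Prod.smul_fst, Prod.smul_snd,
      smul_eq_mul]
    ring
  rw [hcomp, ← h] at h0
  nlinarith

lemma signs {X Y A B p r E : ℤ} (h0 : X * A + Y * B = 0) (hsum : X * p + Y * r = E)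
    (hE : 0 < E) (hp : 0 < p) (hr : 0 < r) (hA : A < 0) (hB : 0 < B) :
    0 ≤ X ∧ 0 ≤ Y := by
  have hY : 0 < Y := by
    rcases lt_trichotomy Y 0 with h | h | h
    · exfalso
      have h1 : Y * B < 0 := mul_neg_of_neg_of_pos h hB
      have h2 : 0 < X * A := by linarith
      have hX : X < 0 := by
        by_contra hx
        push_neg at hx
        nlinarith
      nlinarith [mul_neg_of_neg_of_pos hX hp, mul_neg_of_neg_of_pos h hr]
    · exfalso
      have h2 : X * A = 0 := by rw [h] at h0; linarith
      have hX0 : X = 0 := by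
        rcases mul_eq_zero.mp h2 with h' | h'
        · exact h'
        · exact absurd h' (ne_of_lt hA)
      rw [h, hX0] at hsum
      simp at hsum
      linarith
    · exact h
  have hX : 0 ≤ X := by
    by_contra hx
    push_neg at hx
    have h1 : 0 < X * A := mul_pos_of_neg_of_neg hx hA
    have h2 : 0 < Y * B := mul_pos hY hB
    linarith
  exact ⟨hX, hY.le⟩


/- STATEMENT 9: For a full-dimensional strongly convex rational polyhedral cone
`σ = cone(a,b) ⊆ ℝ²` and `v ∈ int(σ) ∩ ℤ²`, `v` is strongly decomposable in `σ`
iff `1` is not attained by `⟨·,v⟩` on the Hilbert basis of `σ^∨`. -/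
theorem stmt9 (a b : ℤ × ℤ) (hind : LinearIndependent ℝ ![toR a, toR b])
    (v : ℤ × ℤ) (hv : toR v ∈ interior (cone2 a b)) :
    StronglyDecomposable (cone2 a b) v ↔
      ¬ ∃ m ∈ hilb (cone2 a b), pairZ m v = 1 := by
  -- the determinant is nonzero
  have hD : a.1 * b.2 - a.2 * b.1 ≠ 0 := by
    intro h
    rw [LinearIndependent.pair_iff] at hind
    have hcast : (a.1:ℝ) * b.2 - a.2 * b.1 = 0 := by exact_mod_cast h
    have e1 := hind (b.2 : ℝ) (-(a.2 : ℝ)) (by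
      apply Prod.ext
      · simp only [toR, Prod.fst_add, Prod.smul_fst, smul_eq_mul, Prod.fst_zero]
        linear_combination hcast
      · simp only [toR, Prod.snd_add, Prod.smul_snd, smul_eq_mul, Prod.snd_zero]
        ring)
    have e2 := hind (b.1 : ℝ) (-(a.1 : ℝ)) (by
      apply Prod.ext
      · simp only [toR, Prod.fst_add, Prod.smul_fst, smul_eq_mul, Prod.fst_zero]
        ring
      · simp only [toR, Prod.snd_add, Prod.smul_snd, smul_eq_mul, Prod.snd_zero]
        linear_combination -hcast)
    have ha1 : (a.1:ℝ) = 0 := by linarith [e2.2]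
    have ha2 : (a.2:ℝ) = 0 := by linarith [e1.2]
    have hb1 : (b.1:ℝ) = 0 := e2.1
    have hb2 : (b.2:ℝ) = 0 := e1.1
    have := hind 1 0 (by
      apply Prod.ext
      · simp only [toR, Prod.fst_add, Prod.smul_fst, smul_eq_mul, Prod.fst_zero]
        rw [ha1, hb1]; ring
      · simp only [toR, Prod.snd_add, Prod.smul_snd, smul_eq_mul, Prod.snd_zero]
        rw [ha2, hb2]; ring)
    exact one_ne_zero this.1
  -- orientation sign
  obtain ⟨e, he⟩ : ∃ e : ℤ, e = if 0 < a.1 * b.2 - a.2 * b.1 then 1 else -1 := ⟨_, rfl⟩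
  obtain ⟨E, hEdef⟩ : ∃ E : ℤ, E = e * (a.1 * b.2 - a.2 * b.1) := ⟨_, rfl⟩
  have hEpos : 0 < E := by
    rw [hEdef, he]
    split_ifs with h
    · linarith
    · have h' : a.1 * b.2 - a.2 * b.1 < 0 := lt_of_le_of_ne (not_lt.mp h) hD
      nlinarith
  -- the two facet normals
  obtain ⟨m₁, hm₁⟩ : ∃ x : ℤ × ℤ, x = (e * (-a.2), e * a.1) := ⟨_, rfl⟩
  obtain ⟨m₂, hm₂⟩ : ∃ x : ℤ × ℤ, x = (e * b.2, e * (-b.1)) := ⟨_, rfl⟩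
  have p1a : pairZ m₁ a = 0 := by rw [hm₁]; simp only [pairZ]; ring
  have p1b : pairZ m₁ b = E := by rw [hm₁, hEdef]; simp only [pairZ]; ring
  have p2a : pairZ m₂ a = E := by rw [hm₂, hEdef]; simp only [pairZ]; ring
  have p2b : pairZ m₂ b = 0 := by rw [hm₂]; simp only [pairZ]; ring
  -- expansion of an arbitrary real vector in the basis a, b
  have hxp1 : ∀ x : ℝ × ℝ,
      pairR x m₂ * (a.1:ℝ) + pairR x m₁ * (b.1:ℝ) = x.1 * (E:ℝ) := by
    intro x
    rw [hm₁, hm₂, hEdef]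
    simp only [pairR]
    push_cast
    ring
  have hxp2 : ∀ x : ℝ × ℝ,
      pairR x m₂ * (a.2:ℝ) + pairR x m₁ * (b.2:ℝ) = x.2 * (E:ℝ) := by
    intro x
    rw [hm₁, hm₂, hEdef]
    simp only [pairR]
    push_cast
    ring
  have hEneR : (E:ℝ) ≠ 0 := by
    have : (0:ℝ) < (E:ℝ) := by exact_mod_cast hEpos
    linarith
  have hlin : ∀ (c d : ℝ) (m : ℤ × ℤ),
      pairR (c • toR a + d • toR b) m = c * (pairZ m a : ℝ) + d * (pairZ m b : ℝ) := by
    intro c d m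
    simp only [pairR, pairZ, toR, Prod.fst_add, Prod.snd_add, Prod.smul_fst,
      Prod.smul_snd, smul_eq_mul]
    push_cast
    ring
  -- membership in the cone
  have hconeIff : ∀ x : ℝ × ℝ,
      x ∈ cone2 a b ↔ 0 ≤ pairR x m₁ ∧ 0 ≤ pairR x m₂ := by
    intro x
    constructor
    · rintro ⟨c, d, hc, hd, rfl⟩
      rw [hlin, hlin, p1a, p1b, p2a, p2b]
      constructor
      · have : (0:ℝ) ≤ (E:ℝ) := by exact_mod_cast hEpos.le
        push_cast
        nlinarith
      · have : (0:ℝ) ≤ (E:ℝ) := by exact_mod_cast hEpos.le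
        push_cast
        nlinarith
    · rintro ⟨h1, h2⟩
      refine ⟨pairR x m₂ / (E:ℝ), pairR x m₁ / (E:ℝ),
        div_nonneg h2 (by exact_mod_cast hEpos.le),
        div_nonneg h1 (by exact_mod_cast hEpos.le), ?_⟩
      apply Prod.ext
      · simp only [toR, Prod.fst_add, Prod.smul_fst, smul_eq_mul]
        have := hxp1 x
        field_simp
        linarith [hxp1 x]
      · simp only [toR, Prod.snd_add, Prod.smul_snd, smul_eq_mul]
        field_simp
        linarith [hxp2 x]
  -- membership in the dual lattice
  have haIn : toR a ∈ cone2 a b := ⟨1, 0, zero_le_one, le_refl 0, by simp⟩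
  have hbIn : toR b ∈ cone2 a b := ⟨0, 1, le_refl 0, zero_le_one, by simp⟩
  have hdualIff : ∀ m : ℤ × ℤ,
      m ∈ dualLat (cone2 a b) ↔ 0 ≤ pairZ m a ∧ 0 ≤ pairZ m b := by
    intro m
    constructor
    · intro hm
      constructor
      · have := hm (toR a) haIn
        rw [pairR_toR] at this
        exact_mod_cast this
      · have := hm (toR b) hbIn
        rw [pairR_toR] at this
        exact_mod_cast this
    · rintro ⟨h1, h2⟩ x ⟨c, d, hc, hd, rfl⟩
      rw [hlin]
      have h1' : (0:ℝ) ≤ (pairZ m a : ℝ) := by exact_mod_cast h1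
      have h2' : (0:ℝ) ≤ (pairZ m b : ℝ) := by exact_mod_cast h2
      nlinarith
  -- interior criterion
  have hcont : ∀ m : ℤ × ℤ, Continuous fun x : ℝ × ℝ => pairR x m := by
    intro m
    simp only [pairR]
    fun_prop
  have hopen : ∀ w : ℤ × ℤ, 0 < pairZ m₁ w → 0 < pairZ m₂ w →
      toR w ∈ interior (cone2 a b) := by
    intro w h1 h2
    have hsub : {x : ℝ × ℝ | 0 < pairR x m₁ ∧ 0 < pairR x m₂} ⊆ interior (cone2 a b) := by
      apply interior_maximal
      · intro x hx
        exact (hconeIff x).mpr ⟨hx.1.le, hx.2.le⟩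
      · exact (isOpen_lt continuous_const (hcont m₁)).and
          (isOpen_lt continuous_const (hcont m₂))
    apply hsub
    constructor
    · rw [pairR_toR]; exact_mod_cast h1
    · rw [pairR_toR]; exact_mod_cast h2
  -- positivity on interior points
  have hposd : ∀ m : ℤ × ℤ, m ∈ dualLat (cone2 a b) → m ≠ 0 →
      ∀ w : ℤ × ℤ, toR w ∈ interior (cone2 a b) → 0 < pairZ m w := by
    intro m hm hm0 w hw
    have := pairR_pos_of_interior hm hm0 hw
    rw [pairR_toR] at this
    exact_mod_cast this
  have hd1 : m₁ ∈ dualLat (cone2 a b) :=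
    (hdualIff m₁).mpr ⟨le_of_eq p1a.symm, by rw [p1b]; exact hEpos.le⟩
  have hd2 : m₂ ∈ dualLat (cone2 a b) :=
    (hdualIff m₂).mpr ⟨by rw [p2a]; exact hEpos.le, le_of_eq p2b.symm⟩
  have hm₁0 : m₁ ≠ 0 := by
    intro h
    rw [h] at p1b
    simp [pairZ] at p1b
    linarith
  have hm₂0 : m₂ ≠ 0 := by
    intro h
    rw [h] at p2a
    simp [pairZ] at p2a
    linarith
  have hp : 0 < pairZ m₁ v := hposd m₁ hd1 hm₁0 v hv
  have hr : 0 < pairZ m₂ v := hposd m₂ hd2 hm₂0 v hv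
  have pairZ_add : ∀ (m x y : ℤ × ℤ), pairZ m (x + y) = pairZ m x + pairZ m y := by
    intro m x y
    simp only [pairZ, Prod.fst_add, Prod.snd_add]
    ring
  constructor
  · -- decomposable → no Hilbert element of pairing 1
    rintro ⟨v', v'', h', h'', rfl⟩ ⟨m, hmh, hm1⟩
    have hmdual : m ∈ dualLat (cone2 a b) := hmh.1
    have hm0 : m ≠ 0 := hmh.2.1
    have h1 := hposd m hmdual hm0 v' h'
    have h2 := hposd m hmdual hm0 v'' h''
    rw [pairZ_add] at hm1
    linarith
  · -- main direction
    intro hno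
    have H2 : ∀ m ∈ dualLat (cone2 a b), m ≠ 0 → 2 ≤ pairZ m v := by
      intro m hm hm0
      have h1 : 0 < pairZ m v := hposd m hm hm0 v hv
      by_cases hh : m ∈ hilb (cone2 a b)
      · have : pairZ m v ≠ 1 := fun hc => hno ⟨m, hh, hc⟩
        omega
      · have hdec : ∃ m' ∈ dualLat (cone2 a b), ∃ m'' ∈ dualLat (cone2 a b),
            m' ≠ 0 ∧ m'' ≠ 0 ∧ m = m' + m'' := by
          by_contra hc
          exact hh ⟨hm, hm0, hc⟩
        obtain ⟨m', hm', m'', hm'', h0', h0'', rfl⟩ := hdec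
        have a1 : 0 < pairZ m' v := hposd m' hm' h0' v hv
        have a2 : 0 < pairZ m'' v := hposd m'' hm'' h0'' v hv
        have : pairZ (m' + m'') v = pairZ m' v + pairZ m'' v := by
          simp only [pairZ, Prod.fst_add, Prod.snd_add]
          ring
        omega
    -- gcd case split
    have hv0 : v ≠ 0 := by
      intro h
      rw [h] at hp
      simp [pairZ] at hp
    obtain ⟨G, hG⟩ : ∃ G : ℤ, G = (Int.gcd v.1 v.2 : ℤ) := ⟨_, rfl⟩
    by_cases hg2 : 2 ≤ G
    · -- v is a multiple: easy decomposition
      obtain ⟨u1, hu1⟩ : G ∣ v.1 := by rw [hG]; exact Int.gcd_dvd_left _ _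
      obtain ⟨u2, hu2⟩ : G ∣ v.2 := by rw [hG]; exact Int.gcd_dvd_right _ _
      have hval1 : pairZ m₁ v = G * pairZ m₁ (u1, u2) := by
        simp only [pairZ]
        rw [hu1, hu2]
        ring
      have hval2 : pairZ m₂ v = G * pairZ m₂ (u1, u2) := by
        simp only [pairZ]
        rw [hu1, hu2]
        ring
      have hgpos : (0:ℤ) < G := by linarith
      have hu1p : 0 < pairZ m₁ (u1, u2) := by
        by_contra h
        push_neg at h
        nlinarith [hval1 ▸ hp]
      have hu2p : 0 < pairZ m₂ (u1, u2) := by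
        by_contra h
        push_neg at h
        nlinarith [hval2 ▸ hr]
      have hs1 : 0 < pairZ m₁ (v - (u1, u2)) := by
        have : pairZ m₁ (v - (u1, u2)) = pairZ m₁ v - pairZ m₁ (u1, u2) := by
          simp only [pairZ, Prod.fst_sub, Prod.snd_sub]
          ring
        rw [this, hval1]
        nlinarith
      have hs2 : 0 < pairZ m₂ (v - (u1, u2)) := by
        have : pairZ m₂ (v - (u1, u2)) = pairZ m₂ v - pairZ m₂ (u1, u2) := by
          simp only [pairZ, Prod.fst_sub, Prod.snd_sub]
          ring
        rw [this, hval2]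
        nlinarith
      exact ⟨(u1, u2), v - (u1, u2), hopen _ hu1p hu2p, hopen _ hs1 hs2, by ring⟩
    · -- v primitive
      have hgpos : 0 < G := by
        rw [hG]
        exact_mod_cast Int.gcd_pos_iff.mpr (by
          by_contra hc
          push_neg at hc
          exact hv0 (Prod.ext hc.1 hc.2))
      have hg1 : G = 1 := by omega
      -- Bezout companion vector u with det(v, u) = 1
      obtain ⟨u, hudef⟩ : ∃ u : ℤ × ℤ, u = (-(Int.gcdB v.1 v.2), Int.gcdA v.1 v.2) := ⟨_, rfl⟩
      have hdet : v.1 * u.2 - v.2 * u.1 = 1 := by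
        have hb := Int.gcd_eq_gcd_ab v.1 v.2
        rw [← hG, hg1] at hb
        rw [hudef]
        simp only []
        linarith [hb]
      have hmkv : ∀ k : ℤ, pairZ (u.2 - k * v.2, -u.1 + k * v.1) v = 1 := by
        intro k
        simp only [pairZ]
        linear_combination hdet
      have hmku : ∀ k : ℤ, pairZ (u.2 - k * v.2, -u.1 + k * v.1) u = k := by
        intro k
        simp only [pairZ]
        linear_combination k * hdet
      have hzero : ∀ n : ℤ × ℤ, pairZ n v = 0 → pairZ n u = 0 → n = 0 := by
        intro n h1 h2
        have e1 : n.1 = u.2 * pairZ n v - v.2 * pairZ n u := by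
          simp only [pairZ]
          linear_combination (-n.1) * hdet
        have e2 : n.2 = v.1 * pairZ n u - u.1 * pairZ n v := by
          simp only [pairZ]
          linear_combination (-n.2) * hdet
        rw [h1, h2] at e1 e2
        simp only [mul_zero, sub_zero, zero_sub, sub_self, neg_zero] at e1 e2
        exact Prod.ext (by simp only [Prod.fst_zero]; exact e1)
          (by simp only [Prod.snd_zero]; exact e2)
      have hdiv1 : pairZ m₁ v * (pairZ m₁ u / pairZ m₁ v) + pairZ m₁ u % pairZ m₁ v
          = pairZ m₁ u := Int.mul_ediv_add_emod _ _
      have hdiv2 : pairZ m₂ v * (pairZ m₂ u / pairZ m₂ v) + pairZ m₂ u % pairZ m₂ v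
          = pairZ m₂ u := Int.mul_ediv_add_emod _ _
      have hr₁0 : 0 ≤ pairZ m₁ u % pairZ m₁ v := Int.emod_nonneg _ (ne_of_gt hp)
      have hr₂0 : 0 ≤ pairZ m₂ u % pairZ m₂ v := Int.emod_nonneg _ (ne_of_gt hr)
      have hr₁p : pairZ m₁ u % pairZ m₁ v < pairZ m₁ v := Int.emod_lt_of_pos _ hp
      have hr₂p : pairZ m₂ u % pairZ m₂ v < pairZ m₂ v := Int.emod_lt_of_pos _ hr
      have hbig : ∀ n w : ℤ × ℤ,
          E * pairZ n w = pairZ n b * pairZ m₁ w + pairZ n a * pairZ m₂ w := by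
        intro n w
        rw [hm₁, hm₂, hEdef]
        simp only [pairZ]
        ring
      -- Claim 1 : the first remainder is nonzero
      have hC1 : pairZ m₁ u % pairZ m₁ v ≠ 0 := by
        intro hc
        obtain ⟨m, hmdef⟩ : ∃ m : ℤ × ℤ, m = (u.2 - (pairZ m₁ u / pairZ m₁ v) * v.2,
            -u.1 + (pairZ m₁ u / pairZ m₁ v) * v.1) := ⟨_, rfl⟩
        have hmv : pairZ m v = 1 := by rw [hmdef]; exact hmkv _
        have hmu : pairZ m u = pairZ m₁ u / pairZ m₁ v := by rw [hmdef]; exact hmku _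
        have hn0 : (pairZ m₁ v * m.1 - m₁.1, pairZ m₁ v * m.2 - m₁.2) = (0 : ℤ × ℤ) := by
          apply hzero
          · have hq : pairZ (pairZ m₁ v * m.1 - m₁.1, pairZ m₁ v * m.2 - m₁.2) v
                = pairZ m₁ v * pairZ m v - pairZ m₁ v := by
              simp only [pairZ]
              ring
            rw [hq, hmv]
            ring
          · have hq : pairZ (pairZ m₁ v * m.1 - m₁.1, pairZ m₁ v * m.2 - m₁.2) u
                = pairZ m₁ v * pairZ m u - pairZ m₁ u := by
              simp only [pairZ]
              ring
            rw [hq, hmu]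
            linarith [hdiv1]
        have hn0' : pairZ m₁ v * m.1 - m₁.1 = 0 ∧ pairZ m₁ v * m.2 - m₁.2 = 0 := by
          rw [show (0 : ℤ × ℤ) = ((0:ℤ), (0:ℤ)) from rfl, Prod.mk.injEq] at hn0
          exact hn0
        obtain ⟨hn1, hn2⟩ := hn0'
        have hma : pairZ m a = 0 := by
          have h1 : pairZ m₁ v * pairZ m a = pairZ m₁ a := by
            rw [show pairZ m a = m.1 * a.1 + m.2 * a.2 from rfl,
              show pairZ m₁ a = m₁.1 * a.1 + m₁.2 * a.2 from rfl]
            linear_combination a.1 * hn1 + a.2 * hn2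
          rw [p1a] at h1
          exact (mul_eq_zero.mp h1).resolve_left (ne_of_gt hp)
        have hmb : 0 < pairZ m b := by
          have h1 : pairZ m₁ v * pairZ m b = pairZ m₁ b := by
            rw [show pairZ m b = m.1 * b.1 + m.2 * b.2 from rfl,
              show pairZ m₁ b = m₁.1 * b.1 + m₁.2 * b.2 from rfl]
            linear_combination b.1 * hn1 + b.2 * hn2
          rw [p1b] at h1
          have hq2 : 0 < pairZ m₁ v * pairZ m b := by rw [h1]; exact hEpos
          rcases mul_pos_iff.mp hq2 with ⟨_, h'⟩ | ⟨h', _⟩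
          · exact h'
          · linarith [hp]
        have hmd : m ∈ dualLat (cone2 a b) := (hdualIff m).mpr ⟨le_of_eq hma.symm, hmb.le⟩
        have hm0 : m ≠ 0 := by
          intro h
          rw [h] at hmv
          simp [pairZ] at hmv
        have := H2 m hmd hm0
        omega
      -- Claim 2 : the second remainder is nonzero
      have hC2 : pairZ m₂ u % pairZ m₂ v ≠ 0 := by
        intro hc
        obtain ⟨m, hmdef⟩ : ∃ m : ℤ × ℤ, m = (u.2 - (pairZ m₂ u / pairZ m₂ v) * v.2,
            -u.1 + (pairZ m₂ u / pairZ m₂ v) * v.1) := ⟨_, rfl⟩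
        have hmv : pairZ m v = 1 := by rw [hmdef]; exact hmkv _
        have hmu : pairZ m u = pairZ m₂ u / pairZ m₂ v := by rw [hmdef]; exact hmku _
        have hn0 : (pairZ m₂ v * m.1 - m₂.1, pairZ m₂ v * m.2 - m₂.2) = (0 : ℤ × ℤ) := by
          apply hzero
          · have hq : pairZ (pairZ m₂ v * m.1 - m₂.1, pairZ m₂ v * m.2 - m₂.2) v
                = pairZ m₂ v * pairZ m v - pairZ m₂ v := by
              simp only [pairZ]
              ring
            rw [hq, hmv]
            ring
          · have hq : pairZ (pairZ m₂ v * m.1 - m₂.1, pairZ m₂ v * m.2 - m₂.2) u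
                = pairZ m₂ v * pairZ m u - pairZ m₂ u := by
              simp only [pairZ]
              ring
            rw [hq, hmu]
            linarith [hdiv2]
        have hn0' : pairZ m₂ v * m.1 - m₂.1 = 0 ∧ pairZ m₂ v * m.2 - m₂.2 = 0 := by
          rw [show (0 : ℤ × ℤ) = ((0:ℤ), (0:ℤ)) from rfl, Prod.mk.injEq] at hn0
          exact hn0
        obtain ⟨hn1, hn2⟩ := hn0'
        have hmb : pairZ m b = 0 := by
          have h1 : pairZ m₂ v * pairZ m b = pairZ m₂ b := by
            rw [show pairZ m b = m.1 * b.1 + m.2 * b.2 from rfl,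
              show pairZ m₂ b = m₂.1 * b.1 + m₂.2 * b.2 from rfl]
            linear_combination b.1 * hn1 + b.2 * hn2
          rw [p2b] at h1
          exact (mul_eq_zero.mp h1).resolve_left (ne_of_gt hr)
        have hma : 0 < pairZ m a := by
          have h1 : pairZ m₂ v * pairZ m a = pairZ m₂ a := by
            rw [show pairZ m a = m.1 * a.1 + m.2 * a.2 from rfl,
              show pairZ m₂ a = m₂.1 * a.1 + m₂.2 * a.2 from rfl]
            linear_combination a.1 * hn1 + a.2 * hn2
          rw [p2a] at h1
          have hq2 : 0 < pairZ m₂ v * pairZ m a := by rw [h1]; exact hEpos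
          rcases mul_pos_iff.mp hq2 with ⟨_, h'⟩ | ⟨h', _⟩
          · exact h'
          · linarith [hr]
        have hmd : m ∈ dualLat (cone2 a b) := (hdualIff m).mpr ⟨hma.le, le_of_eq hmb.symm⟩
        have hm0 : m ≠ 0 := by
          intro h
          rw [h] at hmv
          simp [pairZ] at hmv
        have := H2 m hmd hm0
        omega
      -- no k can separate the two rays strictly
      have hcore : ∀ k : ℤ,
          (pairZ m₁ u - k * pairZ m₁ v) * (pairZ m₂ u - k * pairZ m₂ v) < 0 → False := by
        intro k hk
        obtain ⟨m, hmdef⟩ : ∃ m : ℤ × ℤ, m = (u.2 - k * v.2, -u.1 + k * v.1) := ⟨_, rfl⟩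
        have hmv : pairZ m v = 1 := by rw [hmdef]; exact hmkv _
        have hmu : pairZ m u = k := by rw [hmdef]; exact hmku _
        have hb1 := hbig m u
        have hb2 := hbig m v
        rw [hmu] at hb1
        rw [hmv] at hb2
        have h1 : pairZ m b * pairZ m₁ v + pairZ m a * pairZ m₂ v = E := by linarith
        have h2 : pairZ m b * (pairZ m₁ u - k * pairZ m₁ v)
            + pairZ m a * (pairZ m₂ u - k * pairZ m₂ v) = 0 := by
          linear_combination -hb1 + k * hb2
        have hnn : 0 ≤ pairZ m a ∧ 0 ≤ pairZ m b := by
          rcases mul_neg_iff.mp hk with ⟨hpos, hneg⟩ | ⟨hneg, hpos⟩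
          · have := signs (X := pairZ m a) (Y := pairZ m b)
              (A := pairZ m₂ u - k * pairZ m₂ v) (B := pairZ m₁ u - k * pairZ m₁ v)
              (p := pairZ m₂ v) (r := pairZ m₁ v)
              (by linarith) (by linarith) hEpos hr hp hneg hpos
            exact ⟨this.1, this.2⟩
          · have := signs (X := pairZ m b) (Y := pairZ m a)
              (A := pairZ m₁ u - k * pairZ m₁ v) (B := pairZ m₂ u - k * pairZ m₂ v)
              (p := pairZ m₁ v) (r := pairZ m₂ v)
              (by linarith) (by linarith) hEpos hp hr hneg hpos
            exact ⟨this.2, this.1⟩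
        have hmd : m ∈ dualLat (cone2 a b) := (hdualIff m).mpr hnn
        have hm0 : m ≠ 0 := by
          intro h
          rw [h] at hmv
          simp [pairZ] at hmv
        have := H2 m hmd hm0
        omega
      -- the two quotients agree
      have hρ₁pos : 0 < pairZ m₁ u % pairZ m₁ v := lt_of_le_of_ne hr₁0 (Ne.symm hC1)
      have hρ₂pos : 0 < pairZ m₂ u % pairZ m₂ v := lt_of_le_of_ne hr₂0 (Ne.symm hC2)
      have hC3 : pairZ m₁ u / pairZ m₁ v = pairZ m₂ u / pairZ m₂ v := by
        by_contra hne
        rcases lt_or_gt_of_ne hne with hlt | hgt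
        · apply hcore (pairZ m₂ u / pairZ m₂ v)
          have hA : pairZ m₁ u - (pairZ m₂ u / pairZ m₂ v) * pairZ m₁ v < 0 := by
            have h1 : (pairZ m₁ u / pairZ m₁ v + 1) * pairZ m₁ v
                ≤ (pairZ m₂ u / pairZ m₂ v) * pairZ m₁ v :=
              mul_le_mul_of_nonneg_right (by omega) hp.le
            linarith [hdiv1, hr₁p]
          have hB : 0 < pairZ m₂ u - (pairZ m₂ u / pairZ m₂ v) * pairZ m₂ v := by
            linarith [hdiv2, hρ₂pos]
          exact mul_neg_of_neg_of_pos hA hB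
        · apply hcore (pairZ m₁ u / pairZ m₁ v)
          have hA : 0 < pairZ m₁ u - (pairZ m₁ u / pairZ m₁ v) * pairZ m₁ v := by
            linarith [hdiv1, hρ₁pos]
          have hB : pairZ m₂ u - (pairZ m₁ u / pairZ m₁ v) * pairZ m₂ v < 0 := by
            have h1 : (pairZ m₂ u / pairZ m₂ v + 1) * pairZ m₂ v
                ≤ (pairZ m₁ u / pairZ m₁ v) * pairZ m₂ v :=
              mul_le_mul_of_nonneg_right (by omega) hr.le
            linarith [hdiv2, hr₂p]
          exact mul_neg_of_pos_of_neg hA hB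
      -- construct the decomposition
      obtain ⟨w, hwdef⟩ : ∃ w : ℤ × ℤ,
          w = (u.1 - (pairZ m₁ u / pairZ m₁ v) * v.1,
               u.2 - (pairZ m₁ u / pairZ m₁ v) * v.2) := ⟨_, rfl⟩
      have hw1 : pairZ m₁ w = pairZ m₁ u - (pairZ m₁ u / pairZ m₁ v) * pairZ m₁ v := by
        rw [hwdef]
        simp only [pairZ]
        ring
      have hw2 : pairZ m₂ w = pairZ m₂ u - (pairZ m₁ u / pairZ m₁ v) * pairZ m₂ v := by
        rw [hwdef]
        simp only [pairZ]
        ring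
      have hw1p : 0 < pairZ m₁ w := by rw [hw1]; linarith [hdiv1, hρ₁pos]
      have hw2p : 0 < pairZ m₂ w := by rw [hw2, hC3]; linarith [hdiv2, hρ₂pos]
      have hvw1 : 0 < pairZ m₁ (v - w) := by
        have hq : pairZ m₁ (v - w) = pairZ m₁ v - pairZ m₁ w := by
          simp only [pairZ, Prod.fst_sub, Prod.snd_sub]
          ring
        rw [hq, hw1]
        linarith [hdiv1, hr₁p]
      have hvw2 : 0 < pairZ m₂ (v - w) := by
        have hq : pairZ m₂ (v - w) = pairZ m₂ v - pairZ m₂ w := by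
          simp only [pairZ, Prod.fst_sub, Prod.snd_sub]
          ring
        rw [hq, hw2, hC3]
        linarith [hdiv2, hr₂p]
      exact ⟨w, v - w, hopen w hw1p hw2p, hopen (v - w) hvw1 hvw2, by ring⟩
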